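/- Let k ≥ 0 be an integer and let h ∈ SL₂(ℤ_p) with h − 1 ∈ p^{2k+1}·M₂(ℤ_p) (SL₂(F) acts E-linearly on V = E² by matrix multiplication and lies in the unitary group of ⟨·,·⟩). Then for every v ∈ p^{−k}·Γ and every w = c + p^{−1}d·δ with c, d ∈ O_E: (i) χ(Tr_{E/F}(⟨v, c(h)v⟩ · N_{D/F}(w))) = 1, where c(h) = (1 − h)(1 + h)^{−1} is the Cayley transform; and (ii) (c(h)v) ⊗ w ∈ A. -/

import Mathlib

noncomputable section
open Matrix

/-- The image of `p` in `E`. -/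
def pE (p : ℕ) [Fact p.Prime] (E : Type) [Field E] [Algebra ℚ_[p] E] : E :=
  algebraMap ℚ_[p] E (p : ℚ_[p])

/-- The ring of integers `O_E = ℤ_p + ℤ_p·α` of the unramified quadratic extension
`E = F(α)`, as a set. -/
def OE (p : ℕ) [Fact p.Prime] (E : Type) [Field E] [Algebra ℚ_[p] E] (α : E) : Set E :=
  {x | ∃ a b : ℤ_[p],
    x = algebraMap ℚ_[p] E (a : ℚ_[p]) + algebraMap ℚ_[p] E (b : ℚ_[p]) * α}

/-- The element `x_{a,b} = !![a, b; p·conj b, conj a]` of the quaternion division algebra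
`D ⊆ M₂(E)`. -/
def qmat (p : ℕ) [Fact p.Prime] (E : Type) [Field E] [Algebra ℚ_[p] E]
    (conj : E → E) (a b : E) : Matrix (Fin 2) (Fin 2) E :=
  !![a, b; pE p E * conj b, conj a]

/-- The uniformizer `δ = x_{0,1}` of `D`, with `δ² = p`. -/
def deltaM (p : ℕ) [Fact p.Prime] (E : Type) [Field E] [Algebra ℚ_[p] E] :
    Matrix (Fin 2) (Fin 2) E :=
  !![0, 1; pE p E, 0]

/-- The maximal order `O_D = {x_{a,b} : a, b ∈ O_E}` of `D`, as a set. -/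
def ODset (p : ℕ) [Fact p.Prime] (E : Type) [Field E] [Algebra ℚ_[p] E]
    (α : E) (conj : E → E) : Set (Matrix (Fin 2) (Fin 2) E) :=
  {m | ∃ a b : E, a ∈ OE p E α ∧ b ∈ OE p E α ∧ m = qmat p E conj a b}

/-- The norm-one group `D¹ = {x ∈ D : det x = 1}`, as a set. -/
def D1set (p : ℕ) [Fact p.Prime] (E : Type) [Field E] [Algebra ℚ_[p] E]
    (conj : E → E) : Set (Matrix (Fin 2) (Fin 2) E) :=
  {m | (∃ a b : E, m = qmat p E conj a b) ∧ m.det = 1}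

/-- `vDge p E α conj r m` says `v_D(m) ≥ r`, i.e. `m ∈ δ^r·O_D = P_D^r`. -/
def vDge (p : ℕ) [Fact p.Prime] (E : Type) [Field E] [Algebra ℚ_[p] E]
    (α : E) (conj : E → E) (r : ℕ) (m : Matrix (Fin 2) (Fin 2) E) : Prop :=
  ∃ yy ∈ ODset p E α conj, m = deltaM p E ^ r * yy

/-- `x ∈ P_E = p·O_E`. -/
def inPE (p : ℕ) [Fact p.Prime] (E : Type) [Field E] [Algebra ℚ_[p] E]
    (α : E) (x : E) : Prop :=
  ∃ c ∈ OE p E α, x = pE p E * c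

/-- The pure tensor `v ⊗ w ∈ 𝒲 = V ⊗_E W` in coordinates: `(v ⊗ w) i j = v i · conj (w j)`
(the `E`-structure on `W`-coordinates is twisted by conjugation, so that the symplectic
form below is well defined on `𝒲`).  Here `w = (c, d)` stands for `c + d·δ ∈ W = D`. -/
def tens (E : Type) [Field E] (conj : E → E) (v w : Fin 2 → E) :
    Matrix (Fin 2) (Fin 2) E :=
  Matrix.of fun i j => v i * conj (w j)

/-- The symplectic form `⟨⟨x, y⟩⟩ = Tr_{E/F}(⟨v,v'⟩·conj(⟨w,w'⟩'))` of `𝒲`, written in the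
coordinates above, with values `t + conj t` landing in (the image of) `F`. -/
def sympE (p : ℕ) [Fact p.Prime] (E : Type) [Field E] [Algebra ℚ_[p] E]
    (conj : E → E) (x y : Matrix (Fin 2) (Fin 2) E) : E :=
  (x 0 0 * conj (y 1 0) - pE p E * (x 0 1 * conj (y 1 1))
      - x 1 0 * conj (y 0 0) + pE p E * (x 1 1 * conj (y 0 1)))
    + conj (x 0 0 * conj (y 1 0) - pE p E * (x 0 1 * conj (y 1 1))
      - x 1 0 * conj (y 0 0) + pE p E * (x 1 1 * conj (y 0 1)))

/-- The lattice `A = Γ ⊗ Γ'`: the `O_E`-span (= additive span) of the pure tensors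
`v ⊗ w` with `v ∈ Γ = O_E²` and `w ∈ Γ' = O_E + O_E·δ`. -/
def Alat (p : ℕ) [Fact p.Prime] (E : Type) [Field E] [Algebra ℚ_[p] E]
    (α : E) (conj : E → E) : AddSubgroup (Matrix (Fin 2) (Fin 2) E) :=
  AddSubgroup.closure
    {m | ∃ v w : Fin 2 → E, (∀ i, v i ∈ OE p E α) ∧ (∀ j, w j ∈ OE p E α) ∧
      m = tens E conj v w}

/-- `x` lies in (the image in `E` of) `ℤ_p`. -/
def integralF (p : ℕ) [Fact p.Prime] (E : Type) [Field E] [Algebra ℚ_[p] E]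
    (x : E) : Prop :=
  ∃ s : ℤ_[p], x = algebraMap ℚ_[p] E ((s : ℚ_[p]))

/-- The dual lattice `L* = {z ∈ 𝒲 : ⟨⟨z, l⟩⟩ ∈ ℤ_p for all l ∈ L}`. -/
def dualLat (p : ℕ) [Fact p.Prime] (E : Type) [Field E] [Algebra ℚ_[p] E]
    (α : E) (conj : E → E) (L : Set (Matrix (Fin 2) (Fin 2) E)) :
    Set (Matrix (Fin 2) (Fin 2) E) :=
  {zz | ∀ l ∈ L, integralF p E (sympE p E conj zz l)}

/-- The entrywise embedding `M₂(ℤ_p) → M₂(E)`. -/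
def toE (p : ℕ) [Fact p.Prime] (E : Type) [Field E] [Algebra ℚ_[p] E]
    (m : Matrix (Fin 2) (Fin 2) ℤ_[p]) : Matrix (Fin 2) (Fin 2) E :=
  m.map fun t => algebraMap ℚ_[p] E (t : ℚ_[p])

/-- The Cayley transform `c(m) = (1 - m)(1 + m)⁻¹`. -/
def cay {E : Type} [Field E] (m : Matrix (Fin 2) (Fin 2) E) : Matrix (Fin 2) (Fin 2) E :=
  (1 - m) * (1 + m)⁻¹

/-- The skew-Hermitian form `⟨x, y⟩ = x₁·conj y₂ - x₂·conj y₁` on `V = E²`. -/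
def sesqV (E : Type) [Field E] (conj : E → E) (x y : Fin 2 → E) : E :=
  x 0 * conj (y 1) - x 1 * conj (y 0)

/-- `Tr_{E/F}(x) = x + conj x`, as an element of `E`. -/
def trEl (E : Type) [Field E] (conj : E → E) (x : E) : E := x + conj x

section OEprops
variable (p : ℕ) [Fact p.Prime] (E : Type) [Field E] [Algebra ℚ_[p] E] (α : E)
  (z : ℤ_[p]ˣ) (hα : α * α = algebraMap ℚ_[p] E ((z : ℤ_[p]) : ℚ_[p]))
  (conj : E →ₐ[ℚ_[p]] E) (hconj : conj α = -α)

theorem OE_add {x y : E} (hx : x ∈ OE p E α) (hy : y ∈ OE p E α) : x + y ∈ OE p E α := by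
  obtain ⟨a, b, rfl⟩ := hx; obtain ⟨a', b', rfl⟩ := hy
  exact ⟨a + a', b + b', by push_cast [map_add]; ring⟩

theorem OE_neg {x : E} (hx : x ∈ OE p E α) : -x ∈ OE p E α := by
  obtain ⟨a, b, rfl⟩ := hx
  exact ⟨-a, -b, by push_cast [map_neg]; ring⟩

theorem OE_sub {x y : E} (hx : x ∈ OE p E α) (hy : y ∈ OE p E α) : x - y ∈ OE p E α := by
  rw [sub_eq_add_neg]; exact OE_add p E α hx (OE_neg p E α hy)

include hα in
theorem OE_mul {x y : E} (hx : x ∈ OE p E α) (hy : y ∈ OE p E α) : x * y ∈ OE p E α := by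
  obtain ⟨a, b, rfl⟩ := hx; obtain ⟨a', b', rfl⟩ := hy
  refine ⟨a * a' + b * b' * (z : ℤ_[p]), a * b' + b * a', ?_⟩
  push_cast [map_add, _root_.map_mul]
  linear_combination (algebraMap ℚ_[p] E (b:ℚ_[p]) * algebraMap ℚ_[p] E (b':ℚ_[p])) * hα

theorem OE_int (s : ℤ_[p]) : algebraMap ℚ_[p] E (s : ℚ_[p]) ∈ OE p E α :=
  ⟨s, 0, by simp⟩

include hconj in
theorem OE_conj {x : E} (hx : x ∈ OE p E α) : conj x ∈ OE p E α := by
  obtain ⟨a, b, rfl⟩ := hx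
  refine ⟨a, -b, ?_⟩
  rw [map_add, _root_.map_mul, AlgHom.commutes, AlgHom.commutes, hconj]
  push_cast [map_neg]
  ring

end OEprops

section MatHelpers
variable (p : ℕ) [Fact p.Prime] (E : Type) [Field E] [Algebra ℚ_[p] E]

theorem toE_mul (M N : Matrix (Fin 2) (Fin 2) ℤ_[p]) :
    toE p E (M * N) = toE p E M * toE p E N := by
  ext i j
  simp [toE, Matrix.mul_apply, Fin.sum_univ_two]

theorem toE_det (M : Matrix (Fin 2) (Fin 2) ℤ_[p]) :
    (toE p E M).det = algebraMap ℚ_[p] E ((M.det : ℤ_[p]) : ℚ_[p]) := by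
  simp [toE, Matrix.det_fin_two]

theorem toE_one_add (M : Matrix (Fin 2) (Fin 2) ℤ_[p]) :
    (1 : Matrix (Fin 2) (Fin 2) E) + toE p E M = toE p E (1 + M) := by
  ext i j
  by_cases hij : i = j <;>
    simp [toE, Matrix.add_apply, Matrix.one_apply, hij]

theorem toE_one_sub (M : Matrix (Fin 2) (Fin 2) ℤ_[p]) :
    (1 : Matrix (Fin 2) (Fin 2) E) - toE p E M = toE p E (1 - M) := by
  ext i j
  by_cases hij : i = j <;>
    simp [toE, Matrix.sub_apply, Matrix.one_apply, hij]

theorem det_one_add_unit (hp : p ≠ 2) (H : Matrix (Fin 2) (Fin 2) ℤ_[p])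
    (hh : ∀ i j, (p : ℤ_[p]) ∣ (H - 1) i j) : IsUnit (1 + H).det := by
  by_contra hcon
  have hdvd : (p : ℤ_[p]) ∣ (1 + H).det :=
    (PadicInt.norm_lt_one_iff_dvd _).mp (PadicInt.not_isUnit_iff.mp hcon)
  have h4 : (4 : ℤ_[p]) = (1 + H).det - 2 * ((H - 1) 0 0) - 2 * ((H - 1) 1 1)
      - ((H - 1) 0 0) * ((H - 1) 1 1) + ((H - 1) 0 1) * ((H - 1) 1 0) := by
    simp [Matrix.det_fin_two, Matrix.add_apply, Matrix.sub_apply, Matrix.one_apply]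
    ring
  have hdvd4 : (p : ℤ_[p]) ∣ (4 : ℤ_[p]) := by
    rw [h4]
    exact dvd_add (dvd_sub (dvd_sub (dvd_sub hdvd ((hh 0 0).mul_left 2))
      ((hh 1 1).mul_left 2)) ((hh 0 0).mul_right _)) ((hh 0 1).mul_right _)
  have hnorm : ‖((4 : ℤ) : ℤ_[p])‖ < 1 := by
    rw [show ((4 : ℤ) : ℤ_[p]) = (4 : ℤ_[p]) by norm_num]
    exact (PadicInt.norm_lt_one_iff_dvd _).mpr hdvd4
  have : (p : ℤ) ∣ 4 := (PadicInt.norm_int_lt_one_iff_dvd 4).mp hnorm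
  have hpn : p ∣ 4 := by exact_mod_cast this
  have : p = 2 := (Nat.prime_dvd_prime_iff_eq (Fact.out : p.Prime) Nat.prime_two).mp
    ((Fact.out : p.Prime).dvd_of_dvd_pow (show p ∣ 2 ^ 2 by norm_num at hpn ⊢; exact hpn))
  exact hp this

theorem cay_toE (H : Matrix (Fin 2) (Fin 2) ℤ_[p]) (hdet : IsUnit (1 + H).det) :
    cay (toE p E H) = toE p E ((1 - H) * (1 + H)⁻¹) := by
  have hdetB : IsUnit ((1 : Matrix (Fin 2) (Fin 2) E) + toE p E H).det := by
    rw [toE_one_add, toE_det]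
    exact hdet.map ((algebraMap ℚ_[p] E).comp (PadicInt.Coe.ringHom))
  have key : (1 : Matrix (Fin 2) (Fin 2) E) - toE p E H
      = toE p E ((1 - H) * (1 + H)⁻¹) * ((1 : Matrix (Fin 2) (Fin 2) E) + toE p E H) := by
    rw [toE_one_add, ← toE_mul, mul_assoc, Matrix.nonsing_inv_mul _ hdet, mul_one, toE_one_sub]
  rw [cay, key, mul_assoc, Matrix.mul_nonsing_inv _ hdetB, mul_one]

end MatHelpers

/-- for `k ≥ 0` and `h ∈ SL₂(ℤ_p)` with `h - 1 ∈ p^{2k+1}·M₂(ℤ_p)`, for every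
`v ∈ p^{-k}·Γ` and every `w = c + p⁻¹·d·δ` with `c, d ∈ O_E`:
(i) `χ(Tr_{E/F}(⟨v, c(h)v⟩·N_{D/F}(w))) = 1`, where `χ(t) = ψ(p·t)`, `c(h)` is the Cayley
transform and `N_{D/F}(w) = c·c̄ - p⁻¹·d·d̄`; and (ii) `(c(h)v) ⊗ w ∈ A`. -/
theorem stmt14 (p : ℕ) [Fact p.Prime] (hp : p ≠ 2)
    (z : ℤ_[p]ˣ) (hz : ¬ ∃ w : ℤ_[p], w * w = (z : ℤ_[p]))
    (E : Type) [Field E] [Algebra ℚ_[p] E] (α : E)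
    (hα : α * α = algebraMap ℚ_[p] E ((z : ℤ_[p]) : ℚ_[p]))
    (hα0 : α ∉ Set.range (algebraMap ℚ_[p] E))
    (hspan : ∀ x : E, ∃ a b : ℚ_[p], x = algebraMap ℚ_[p] E a + algebraMap ℚ_[p] E b * α)
    (conj : E →ₐ[ℚ_[p]] E) (hconj : conj α = -α)
    (TrF : E → ℚ_[p]) (hTrF : ∀ t : ℚ_[p], TrF (algebraMap ℚ_[p] E t) = t)
    (ψ : AddChar ℚ_[p] ℂˣ)
    (hψ1 : ∀ t : ℤ_[p], ψ ((p : ℚ_[p]) * (t : ℚ_[p])) = 1)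
    (hψ2 : ∃ t : ℤ_[p], ψ ((t : ℚ_[p])) ≠ 1)
    (k : ℕ) (h : Matrix.SpecialLinearGroup (Fin 2) ℤ_[p])
    (hh : ∀ i j : Fin 2,
      ((p : ℤ_[p]) ^ (2 * k + 1)) ∣ ((h : Matrix (Fin 2) (Fin 2) ℤ_[p]) - 1) i j)
    (v : Fin 2 → E) (hv : ∀ i, pE p E ^ k * v i ∈ OE p E α)
    (c d : E) (hc : c ∈ OE p E α) (hd : d ∈ OE p E α) :
    ψ ((p : ℚ_[p]) * TrF (trEl E conj
        (sesqV E conj v ((cay (toE p E (h : Matrix (Fin 2) (Fin 2) ℤ_[p]))).mulVec v)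
          * (c * conj c - (pE p E)⁻¹ * (d * conj d))))) = 1 ∧
    tens E conj ((cay (toE p E (h : Matrix (Fin 2) (Fin 2) ℤ_[p]))).mulVec v)
        ![c, (pE p E)⁻¹ * d] ∈ Alat p E α conj := by
  have pprime : p.Prime := Fact.out
  set φ := algebraMap ℚ_[p] E with hφdef
  set H := (h : Matrix (Fin 2) (Fin 2) ℤ_[p]) with hHdef
  -- basic facts about pE
  have hpEdef : pE p E = φ ((p : ℕ) : ℚ_[p]) := rfl
  have hpEf : φ (((p : ℤ_[p]) : ℚ_[p])) = pE p E := by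
    rw [hpEdef, PadicInt.coe_natCast]
  have hpE0 : pE p E ≠ 0 := by
    rw [pE]
    intro h0
    exact (Nat.cast_ne_zero (R := ℚ_[p])).mpr pprime.ne_zero
      ((algebraMap ℚ_[p] E).injective (by simpa using h0))
  have hOpE : ∀ n : ℕ, pE p E ^ n ∈ OE p E α := by
    intro n
    have : pE p E ^ n = φ ((((p : ℤ_[p]) ^ n : ℤ_[p])) : ℚ_[p]) := by
      push_cast [map_pow, hpEdef]
      rfl
    rw [this]
    exact OE_int p E α _
  -- the Cayley transform over ℤ_[p]
  have hdetH : IsUnit (1 + H).det :=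
    det_one_add_unit p hp H fun i j =>
      dvd_trans (dvd_pow_self (p : ℤ_[p]) (by omega)) (hh i j)
  set C := (1 - H) * (1 + H)⁻¹ with hCdef
  have hcayC : cay (toE p E H) = toE p E C := cay_toE p E H hdetH
  have hCdvd : ∀ i j, ∃ s : ℤ_[p], C i j = (p : ℤ_[p]) ^ (2 * k + 1) * s := by
    intro i j
    rw [hCdef, Matrix.mul_apply]
    have : ∀ l : Fin 2, (p : ℤ_[p]) ^ (2 * k + 1) ∣ (1 - H) i l * (1 + H)⁻¹ l j := by
      intro l
      have h1 : (1 - H) i l = -((H - 1) i l) := by simp only [Matrix.sub_apply]; ring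
      rw [h1]
      exact (dvd_neg.mpr (hh i l)).mul_right _
    exact Finset.dvd_sum fun l _ => this l
  choose s hs using hCdvd
  -- the vector u with (c(h)v)_i = p^{k+1} u_i
  set u : Fin 2 → E := fun i =>
    φ ((s i 0 : ℤ_[p]) : ℚ_[p]) * (pE p E ^ k * v 0)
      + φ ((s i 1 : ℤ_[p]) : ℚ_[p]) * (pE p E ^ k * v 1) with hudef
  have hu : ∀ i, u i ∈ OE p E α := fun i =>
    OE_add p E α (OE_mul p E α z hα (OE_int p E α _) (hv 0))
      (OE_mul p E α z hα (OE_int p E α _) (hv 1))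
  have hCv : ∀ i, (cay (toE p E H)).mulVec v i = pE p E ^ (k + 1) * u i := by
    intro i
    rw [hcayC]
    have e1 : (toE p E C).mulVec v i
        = φ ((C i 0 : ℤ_[p]) : ℚ_[p]) * v 0 + φ ((C i 1 : ℤ_[p]) : ℚ_[p]) * v 1 := by
      simp [toE, Matrix.mulVec, dotProduct, Fin.sum_univ_two, hφdef]
    rw [e1, hs i 0, hs i 1, hudef]
    have e2 : ∀ t : ℤ_[p], φ ((((p : ℤ_[p]) ^ (2 * k + 1) * t : ℤ_[p])) : ℚ_[p])
        = pE p E ^ (2 * k + 1) * φ ((t : ℚ_[p])) := by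
      intro t
      push_cast [_root_.map_mul, map_pow, hpEdef]
      rfl
    rw [e2, e2, show 2 * k + 1 = (k + 1) + k by omega, pow_add]
    ring
  -- conj fixes pE
  have hconjpE : conj (pE p E) = pE p E := conj.commutes _
  -- part (i)
  have hy : sesqV E conj v ((cay (toE p E H)).mulVec v)
      = pE p E * ((pE p E ^ k * v 0) * conj (u 1) - (pE p E ^ k * v 1) * conj (u 0)) := by
    rw [sesqV, hCv 0, hCv 1, _root_.map_mul, _root_.map_mul, map_pow, hconjpE]
    ring
  set y := (pE p E ^ k * v 0) * conj (u 1) - (pE p E ^ k * v 1) * conj (u 0) with hydef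
  have hyOE : y ∈ OE p E α :=
    OE_sub p E α (OE_mul p E α z hα (hv 0) (OE_conj p E α conj hconj (hu 1)))
      (OE_mul p E α z hα (hv 1) (OE_conj p E α conj hconj (hu 0)))
  have hX : sesqV E conj v ((cay (toE p E H)).mulVec v)
      * (c * conj c - (pE p E)⁻¹ * (d * conj d))
      = (pE p E * y) * (c * conj c) - y * (d * conj d) := by
    rw [hy]
    field_simp
  have hXOE : sesqV E conj v ((cay (toE p E H)).mulVec v)
      * (c * conj c - (pE p E)⁻¹ * (d * conj d)) ∈ OE p E α := by
    rw [hX]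
    have hOpE1 : pE p E ∈ OE p E α := by have := hOpE 1; rwa [pow_one] at this
    exact OE_sub p E α
      (OE_mul p E α z hα (OE_mul p E α z hα hOpE1 hyOE)
        (OE_mul p E α z hα hc (OE_conj p E α conj hconj hc)))
      (OE_mul p E α z hα hyOE (OE_mul p E α z hα hd (OE_conj p E α conj hconj hd)))
  obtain ⟨a, b, hab⟩ := hXOE
  have htr : trEl E conj (sesqV E conj v ((cay (toE p E H)).mulVec v)
      * (c * conj c - (pE p E)⁻¹ * (d * conj d))) = φ (((a + a : ℤ_[p]) : ℚ_[p])) := by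
    rw [trEl, hab, map_add, _root_.map_mul, AlgHom.commutes, AlgHom.commutes, hconj]
    push_cast [map_add]
    ring
  constructor
  · rw [htr, hTrF]
    exact hψ1 (a + a)
  -- part (ii)
  · have hconjzero : conj 0 = 0 := map_zero conj
    have hconjinv : conj (pE p E)⁻¹ = (pE p E)⁻¹ := by rw [map_inv₀, hconjpE]
    set v1 : Fin 2 → E := fun i => pE p E ^ (k + 1) * u i with hv1def
    set v2 : Fin 2 → E := fun i => pE p E ^ k * u i with hv2def
    have hv1 : ∀ i, v1 i ∈ OE p E α := fun i => OE_mul p E α z hα (hOpE _) (hu i)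
    have hv2 : ∀ i, v2 i ∈ OE p E α := fun i => OE_mul p E α z hα (hOpE _) (hu i)
    have hOzero : (0 : E) ∈ OE p E α := ⟨0, 0, by simp⟩
    have hsplit : tens E conj ((cay (toE p E H)).mulVec v) ![c, (pE p E)⁻¹ * d]
        = tens E conj v1 ![c, 0] + tens E conj v2 ![0, d] := by
      ext i j
      fin_cases j
      · simp only [tens, Matrix.add_apply, Matrix.of_apply, hCv i]
        simp [hv1def, hv2def, hconjzero]
      · simp only [tens, Matrix.add_apply, Matrix.of_apply, hCv i, hv1def, hv2def]
        simp [_root_.map_mul, hconjinv, hconjzero]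
        rw [pow_succ]
        field_simp
    rw [hsplit]
    exact AddSubgroup.add_mem _
      (AddSubgroup.subset_closure ⟨v1, ![c, 0], hv1,
        fun j => by fin_cases j <;> simp [hc, hOzero], rfl⟩)
      (AddSubgroup.subset_closure ⟨v2, ![0, d], hv2,
        fun j => by fin_cases j <;> simp [hd, hOzero], rfl⟩)
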